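/- Let X be a complex Banach space, let A : X → X be a bounded linear operator, let q₀ > 0, and assume the spectrum σ(A) is contained in {z ∈ ℂ : Re z > q₀}. Let α ∈ ℝ with 1 < α < 2, let a, b ∈ X, and let ψ be a continuous linear functional on X. Suppose that for every η ∈ ℂ with Re η < 0, (-η)^{1/α} · ψ((A - η·I)^{-1} a) = - ψ((A - η·I)^{-1} b), where (A - η·I)^{-1} exists as a bounded operator since η lies in the resolvent set of A, and w^{1/α} denotes the principal complex power. Then ψ((A - z·I)^{-1} a) = 0 and ψ((A - z·I)^{-1} b) = 0 for every z in the connected component of the resolvent set of A containing the half-plane {z ∈ ℂ : Re z < 0}. -/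

import Mathlib

open Complex Set

private lemma branch_pos {z : ℂ} (hz : 0 < z.im) (c : ℂ) :
    (-z) ^ c = z ^ c * Complex.exp (-(↑Real.pi * c * I)) := by
  have hz0 : z ≠ 0 := by intro h; simp [h] at hz
  rw [cpow_def_of_ne_zero (neg_ne_zero.2 hz0) c, cpow_def_of_ne_zero hz0 c, ← Complex.exp_add]
  congr 1
  have hlog : Complex.log (-z) = Complex.log z - ↑Real.pi * I := by
    apply Complex.ext
    · simp [Complex.log_re]
    · simp [Complex.log_im, arg_neg_eq_arg_sub_pi_of_im_pos hz]
  rw [hlog]; ring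

private lemma branch_neg {z : ℂ} (hz : z.im < 0) (c : ℂ) :
    (-z) ^ c = z ^ c * Complex.exp (↑Real.pi * c * I) := by
  have hz0 : z ≠ 0 := by intro h; simp [h] at hz
  rw [cpow_def_of_ne_zero (neg_ne_zero.2 hz0) c, cpow_def_of_ne_zero hz0 c, ← Complex.exp_add]
  congr 1
  have hlog : Complex.log (-z) = Complex.log z + ↑Real.pi * I := by
    apply Complex.ext
    · simp [Complex.log_re]
    · simp [Complex.log_im, arg_neg_eq_arg_add_pi_of_im_neg hz]
  rw [hlog]; ring

/-- Resolvent formulation of the First Step of the proof of Theorem 1: if the spectrum of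
a bounded operator `A` lies in `{Re z > q₀}` with `q₀ > 0`, and
`(-η)^{1/α} ψ((A - η)⁻¹ a) = -ψ((A - η)⁻¹ b)` for every `η` with `Re η < 0`, then both
pairings vanish on the connected component of the resolvent set containing the
half-plane `{Re z < 0}` (the component of `-1`). -/
theorem stmt_8 {X : Type*} [NormedAddCommGroup X] [NormedSpace ℂ X] [CompleteSpace X]
    (A : X →L[ℂ] X) (q₀ : ℝ) (hq₀ : 0 < q₀)
    (hspec : spectrum ℂ A ⊆ {z : ℂ | q₀ < z.re})
    (α : ℝ) (hα1 : 1 < α) (hα2 : α < 2)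
    (a b : X) (ψ : X →L[ℂ] ℂ)
    (heq : ∀ η : ℂ, η.re < 0 →
      (-η) ^ ((1 / α : ℝ) : ℂ) * ψ ((Ring.inverse (A - η • (1 : X →L[ℂ] X))) a) =
        - ψ ((Ring.inverse (A - η • (1 : X →L[ℂ] X))) b)) :
    ∀ z ∈ connectedComponentIn ((spectrum ℂ A)ᶜ) (-1 : ℂ),
      ψ ((Ring.inverse (A - z • (1 : X →L[ℂ] X))) a) = 0 ∧
      ψ ((Ring.inverse (A - z • (1 : X →L[ℂ] X))) b) = 0 := by
  have hα0 : 0 < α := lt_trans one_pos hα1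
  set c : ℂ := ((1 / α : ℝ) : ℂ) with hc
  set S : Set ℂ := (spectrum ℂ A)ᶜ with hS
  have hSopen : IsOpen S := (spectrum.isClosed (𝕜 := ℂ) A).isOpen_compl
  have hunit : ∀ z ∈ S, IsUnit (A - z • (1 : X →L[ℂ] X)) := by
    intro z hz
    have h := spectrum.notMem_iff.mp hz
    rw [Algebra.algebraMap_eq_smul_one] at h
    simpa [neg_sub] using h.neg
  set F : ℂ → ℂ := fun z => ψ ((Ring.inverse (A - z • (1 : X →L[ℂ] X))) a) with hF
  set G : ℂ → ℂ := fun z => ψ ((Ring.inverse (A - z • (1 : X →L[ℂ] X))) b) with hG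
  have hdiff : ∀ x : X, ∀ z ∈ S, DifferentiableAt ℂ
      (fun z : ℂ => ψ ((Ring.inverse (A - z • (1 : X →L[ℂ] X))) x)) z := by
    intro x z hz
    have h1 : DifferentiableAt ℂ (fun z : ℂ => A - z • (1 : X →L[ℂ] X)) z :=
      (differentiableAt_const _).sub (differentiableAt_id.smul_const _)
    have h3 := h1.inverse (hunit z hz)
    exact ψ.differentiableAt.comp z (h3.clm_apply (differentiableAt_const x))
  have hFan : AnalyticOnNhd ℂ F S :=
    DifferentiableOn.analyticOnNhd
      (fun z hz => ((hdiff a z hz).differentiableWithinAt)) hSopen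
  have hGan : AnalyticOnNhd ℂ G S :=
    DifferentiableOn.analyticOnNhd
      (fun z hz => ((hdiff b z hz).differentiableWithinAt)) hSopen
  -- the slit region Ω
  set U₁ : Set ℂ := {z | z.re < q₀} ∩ {z | 0 < z.im} with hU₁
  set U₂ : Set ℂ := {z | z.re < q₀} ∩ {z | z.im < 0} with hU₂
  set U₃ : Set ℂ := {z | 0 < z.re} ∩ {z | z.re < q₀} with hU₃
  set Ω : Set ℂ := (U₁ ∪ U₃) ∪ U₂ with hΩ
  have hU₁o : IsOpen U₁ :=
    (isOpen_lt continuous_re continuous_const).inter (isOpen_lt continuous_const continuous_im)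
  have hU₂o : IsOpen U₂ :=
    (isOpen_lt continuous_re continuous_const).inter (isOpen_lt continuous_im continuous_const)
  have hU₃o : IsOpen U₃ :=
    (isOpen_lt continuous_const continuous_re).inter (isOpen_lt continuous_re continuous_const)
  have hΩo : IsOpen Ω := (hU₁o.union hU₃o).union hU₂o
  have hΩre : ∀ z ∈ Ω, z.re < q₀ := by
    rintro z ((⟨h, _⟩ | ⟨_, h⟩) | ⟨h, _⟩) <;> exact h
  have hΩS : Ω ⊆ S := by
    intro z hz
    intro hmem
    exact absurd (hspec hmem) (not_lt.2 (hΩre z hz).le)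
  have hΩslit : ∀ z ∈ Ω, z ∈ slitPlane := by
    rintro z ((⟨_, h⟩ | ⟨h, _⟩) | ⟨_, h⟩)
    · exact Or.inr (ne_of_gt h)
    · exact Or.inl h
    · exact Or.inr (ne_of_lt h)
  have hΩne : ∀ z ∈ Ω, z ≠ 0 := fun z hz => slitPlane_ne_zero (hΩslit z hz)
  -- connectivity of Ω
  have hp₁ : ((q₀ / 2 : ℝ) : ℂ) + I ∈ U₁ ∩ U₃ := by
    constructor <;> constructor <;> simp <;> linarith
  have hp₂ : ((q₀ / 2 : ℝ) : ℂ) - I ∈ (U₁ ∪ U₃) ∩ U₂ := by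
    constructor
    · right; constructor <;> simp <;> linarith
    · constructor <;> simp <;> linarith
  have hconv : ∀ s t : Set ℂ, Convex ℝ s → Convex ℝ t → Convex ℝ (s ∩ t) :=
    fun s t hs ht => hs.inter ht
  have hU₁c : IsPreconnected U₁ :=
    ((convex_halfSpace_re_lt q₀).inter (convex_halfSpace_im_gt 0)).isPreconnected
  have hU₂c : IsPreconnected U₂ :=
    ((convex_halfSpace_re_lt q₀).inter (convex_halfSpace_im_lt 0)).isPreconnected
  have hU₃c : IsPreconnected U₃ :=
    ((convex_halfSpace_re_gt 0).inter (convex_halfSpace_re_lt q₀)).isPreconnected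
  have h13 : IsPreconnected (U₁ ∪ U₃) :=
    IsPreconnected.union _ hp₁.1 hp₁.2 hU₁c hU₃c
  have hΩc : IsPreconnected Ω :=
    IsPreconnected.union _ hp₂.1 hp₂.2 h13 hU₂c
  -- the two auxiliary functions
  set Hp : ℂ → ℂ := fun z => Complex.exp (-(↑Real.pi * c * I)) * z ^ c * F z + G z with hHp
  set Hm : ℂ → ℂ := fun z => Complex.exp (↑Real.pi * c * I) * z ^ c * F z + G z with hHm
  have hcpow : ∀ z ∈ Ω, DifferentiableAt ℂ (fun z : ℂ => z ^ c) z := by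
    intro z hz
    exact differentiableAt_id.cpow (differentiableAt_const c) (hΩslit z hz)
  have hHpan : AnalyticOnNhd ℂ Hp Ω := by
    apply DifferentiableOn.analyticOnNhd _ hΩo
    intro z hz
    exact ((((differentiableAt_const _).mul (hcpow z hz)).mul
      (hdiff a z (hΩS hz))).add (hdiff b z (hΩS hz))).differentiableWithinAt
  have hHman : AnalyticOnNhd ℂ Hm Ω := by
    apply DifferentiableOn.analyticOnNhd _ hΩo
    intro z hz
    exact ((((differentiableAt_const _).mul (hcpow z hz)).mul
      (hdiff a z (hΩS hz))).add (hdiff b z (hΩS hz))).differentiableWithinAt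
  -- base points
  have hbase₁ : (-1 + I : ℂ) ∈ U₁ := by constructor <;> simp <;> linarith
  have hbase₂ : (-1 - I : ℂ) ∈ U₂ := by constructor <;> simp <;> linarith
  have hbase₁Ω : (-1 + I : ℂ) ∈ Ω := Or.inl (Or.inl hbase₁)
  have hbase₂Ω : (-1 - I : ℂ) ∈ Ω := Or.inr hbase₂
  -- Hp vanishes near -1+I
  set Qp : Set ℂ := {z | z.re < 0} ∩ {z | 0 < z.im} with hQp
  set Qm : Set ℂ := {z | z.re < 0} ∩ {z | z.im < 0} with hQm
  have hQpo : IsOpen Qp :=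
    (isOpen_lt continuous_re continuous_const).inter (isOpen_lt continuous_const continuous_im)
  have hQmo : IsOpen Qm :=
    (isOpen_lt continuous_re continuous_const).inter (isOpen_lt continuous_im continuous_const)
  have hQpeq : EqOn Hp 0 Qp := by
    intro z hz
    have h := heq z hz.1
    rw [branch_pos hz.2 c] at h
    simp only [hHp, Pi.zero_apply, hF, hG]
    rw [show Complex.exp (-(↑Real.pi * c * I)) * z ^ c = z ^ c * Complex.exp (-(↑Real.pi * c * I))
      from mul_comm _ _]
    rw [h]; ring
  have hQmeq : EqOn Hm 0 Qm := by
    intro z hz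
    have h := heq z hz.1
    rw [branch_neg hz.2 c] at h
    simp only [hHm, Pi.zero_apply, hF, hG]
    rw [show Complex.exp (↑Real.pi * c * I) * z ^ c = z ^ c * Complex.exp (↑Real.pi * c * I)
      from mul_comm _ _]
    rw [h]; ring
  have hbase₁Qp : (-1 + I : ℂ) ∈ Qp := by constructor <;> simp
  have hbase₂Qm : (-1 - I : ℂ) ∈ Qm := by constructor <;> simp
  have hHp0 : EqOn Hp 0 Ω := by
    apply hHpan.eqOn_zero_of_preconnected_of_eventuallyEq_zero hΩc hbase₁Ω
    exact Filter.eventuallyEq_of_mem (hQpo.mem_nhds hbase₁Qp) hQpeq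
  have hHm0 : EqOn Hm 0 Ω := by
    apply hHman.eqOn_zero_of_preconnected_of_eventuallyEq_zero hΩc hbase₂Ω
    exact Filter.eventuallyEq_of_mem (hQmo.mem_nhds hbase₂Qm) hQmeq
  -- the two exponentials differ
  have hexp_ne : Complex.exp (-(↑Real.pi * c * I)) ≠ Complex.exp (↑Real.pi * c * I) := by
    intro h
    rw [Complex.exp_eq_exp_iff_exists_int] at h
    obtain ⟨n, hn⟩ := h
    have him := congrArg Complex.im hn
    simp [hc] at him
    -- him : -(π * (1/α)) = π * (1/α) + n * (2 * π)  (up to simp normal form)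
    have hπ := Real.pi_pos
    have hα' : (1 : ℝ) / 2 < 1 / α := by
      rw [div_lt_div_iff₀ (by norm_num) hα0]; linarith
    have hα'' : (1 : ℝ) / α < 1 := by
      rw [div_lt_one hα0]; linarith
    field_simp at him
    have h0 : 2 * Real.pi * α * (1 + (n : ℝ) * α) = 0 := by linear_combination (-Real.pi * α) * him
    have hne : 2 * Real.pi * α ≠ 0 := by positivity
    have h1 : (n : ℝ) * α = -1 := by
      rcases mul_eq_zero.mp h0 with h' | h'
      · exact absurd h' hne
      · linarith
    rcases le_or_gt n (-1) with h2 | h2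
    · have : (n : ℝ) ≤ -1 := by exact_mod_cast h2
      nlinarith
    · have : (0 : ℤ) ≤ n := by omega
      have : (0 : ℝ) ≤ (n : ℝ) := by exact_mod_cast this
      nlinarith
  -- F and G vanish on Ω
  have hF0 : EqOn F 0 Ω := by
    intro z hz
    have e1 := hHp0 hz
    have e2 := hHm0 hz
    simp only [hHp, hHm, Pi.zero_apply] at e1 e2
    have e3 : (Complex.exp (-(↑Real.pi * c * I)) - Complex.exp (↑Real.pi * c * I)) *
        (z ^ c * F z) = 0 := by linear_combination e1 - e2
    rcases mul_eq_zero.mp e3 with h | h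
    · exact absurd (sub_eq_zero.mp h) hexp_ne
    · rcases mul_eq_zero.mp h with h' | h'
      · exact absurd (((cpow_eq_zero_iff z c).mp h').1) (hΩne z hz)
      · exact h'
  have hG0 : EqOn G 0 Ω := by
    intro z hz
    have e1 := hHp0 hz
    simp only [hHp, Pi.zero_apply] at e1
    have := hF0 hz
    simp only [Pi.zero_apply] at this
    rw [this] at e1
    simpa using e1
  -- transfer to the connected component
  set C : Set ℂ := connectedComponentIn S (-1 : ℂ) with hCdef
  have hCsub : C ⊆ S := connectedComponentIn_subset _ _
  have hCpre : IsPreconnected C := isPreconnected_connectedComponentIn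
  have hL : {z : ℂ | z.re < 0} ⊆ C := by
    apply IsPreconnected.subset_connectedComponentIn
      (convex_halfSpace_re_lt (0 : ℝ)).isPreconnected
    · show (-1 : ℂ).re < 0; simp
    · intro z hz hmem
      exact absurd (hspec hmem) (by simp only [mem_setOf_eq] at hz ⊢; push_neg; nlinarith)
  have hbase₁C : (-1 + I : ℂ) ∈ C := hL (by simp)
  have hFev : F =ᶠ[nhds (-1 + I : ℂ)] 0 :=
    Filter.eventuallyEq_of_mem (hΩo.mem_nhds hbase₁Ω) hF0
  have hGev : G =ᶠ[nhds (-1 + I : ℂ)] 0 :=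
    Filter.eventuallyEq_of_mem (hΩo.mem_nhds hbase₁Ω) hG0
  have hFC : EqOn F 0 C :=
    (hFan.mono hCsub).eqOn_zero_of_preconnected_of_eventuallyEq_zero hCpre hbase₁C hFev
  have hGC : EqOn G 0 C :=
    (hGan.mono hCsub).eqOn_zero_of_preconnected_of_eventuallyEq_zero hCpre hbase₁C hGev
  intro z hz
  exact ⟨hFC hz, hGC hz⟩
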